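/- Let B ∈ ℝ^{m×n} have full column rank (rank B = n, with m ≥ n), let H ∈ ℝ^{n×n} be symmetric, let R ∈ ℝ^{m×m} be symmetric positive definite, and let δ > 0. Let L = (BᵀB)⁻¹Bᵀ (the Moore–Penrose pseudoinverse of B, so that LB = I_n), define the cancellation matrix C_can = −Lᵀ H L, let λ_min(BᵀRB) denote the smallest eigenvalue of the symmetric positive definite matrix BᵀRB, set α = δ / λ_min(BᵀRB), and set M = C_can + α R. Then H + Bᵀ M B = α BᵀRB, and H + Bᵀ M B − δ I_n is positive semidefinite. -/

import Mathlib

open Matrix Pointwise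

lemma aux_posSemidef_smul {n : ℕ} {A : Matrix (Fin n) (Fin n) ℝ} (hA : A.PosSemidef)
    {c : ℝ} (hc : 0 ≤ c) : (c • A).PosSemidef := by
  refine .of_dotProduct_mulVec_nonneg ?_ (fun x => ?_)
  · rw [IsHermitian, conjTranspose_smul, hA.1]
    simp
  · rw [smul_mulVec, dotProduct_smul, smul_eq_mul]
    exact mul_nonneg hc (hA.dotProduct_mulVec_nonneg x)

lemma aux_posSemidef_smul_one {n : ℕ} {c : ℝ} (hc : 0 ≤ c) :
    (c • (1 : Matrix (Fin n) (Fin n) ℝ)).PosSemidef :=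
  aux_posSemidef_smul PosSemidef.one hc

theorem closed_form_target_curvature
    {m n : ℕ}
    (B : Matrix (Fin m) (Fin n) ℝ)
    (hmn : n ≤ m) (hrank : B.rank = n)
    (H : Matrix (Fin n) (Fin n) ℝ) (hH : H.IsSymm)
    (R : Matrix (Fin m) (Fin m) ℝ) (hR : R.PosDef)
    (δ : ℝ) (hδ : 0 < δ)
    (lam : ℝ) (hlam : IsLeast (spectrum ℝ (Bᵀ * R * B)) lam) :
    H + Bᵀ * (-(((Bᵀ * B)⁻¹ * Bᵀ)ᵀ * H * ((Bᵀ * B)⁻¹ * Bᵀ)) + (δ / lam) • R) * B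
        = (δ / lam) • (Bᵀ * R * B)
      ∧ (H + Bᵀ * (-(((Bᵀ * B)⁻¹ * Bᵀ)ᵀ * H * ((Bᵀ * B)⁻¹ * Bᵀ)) + (δ / lam) • R) * B
          - δ • (1 : Matrix (Fin n) (Fin n) ℝ)).PosSemidef := by
  set L : Matrix (Fin n) (Fin m) ℝ := (Bᵀ * B)⁻¹ * Bᵀ with hL
  set S : Matrix (Fin n) (Fin n) ℝ := Bᵀ * R * B with hSdef
  -- injectivity of B
  have hker : ∀ x : Fin n → ℝ, B *ᵥ x = 0 → x = 0 := by
    intro x hx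
    have h1 := LinearMap.finrank_range_add_finrank_ker B.mulVecLin
    have h2 : Module.finrank ℝ (LinearMap.range B.mulVecLin) = n := hrank
    rw [h2, Module.finrank_pi, Fintype.card_fin] at h1
    have h3 : Module.finrank ℝ (LinearMap.ker B.mulVecLin) = 0 := by omega
    have h4 : LinearMap.ker B.mulVecLin = ⊥ := Submodule.finrank_eq_zero.mp h3
    have : x ∈ LinearMap.ker B.mulVecLin := by simpa [LinearMap.mem_ker] using hx
    simpa [h4] using this
  -- Bᵀ B is positive definite
  have hBtB : (Bᵀ * B).PosDef := by
    refine .of_dotProduct_mulVec_pos ?_ (fun x hx => ?_)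
    · rw [← conjTranspose_eq_transpose_of_trivial B]
      exact isHermitian_conjTranspose_mul_self B
    · have e : star x ⬝ᵥ ((Bᵀ * B) *ᵥ x) = star (B *ᵥ x) ⬝ᵥ (B *ᵥ x) := by
        simp only [← mulVec_mulVec, dotProduct_mulVec, vecMul_transpose, star_trivial]
      rw [e]
      exact dotProduct_star_self_pos_iff.mpr fun h => hx (hker x h)
  -- Bᵀ R B is positive definite
  have hS : S.PosDef := by
    refine .of_dotProduct_mulVec_pos ?_ (fun x hx => ?_)
    · rw [hSdef, ← conjTranspose_eq_transpose_of_trivial B]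
      exact isHermitian_conjTranspose_mul_mul B hR.1
    · have e : star x ⬝ᵥ (S *ᵥ x) = star (B *ᵥ x) ⬝ᵥ (R *ᵥ (B *ᵥ x)) := by
        simp only [hSdef, ← mulVec_mulVec, dotProduct_mulVec, vecMul_transpose, star_trivial]
      rw [e]
      exact hR.dotProduct_mulVec_pos (x := B *ᵥ x) fun h => hx (hker x h)
  have hdet : IsUnit (Bᵀ * B).det := hBtB.det_pos.ne'.isUnit
  have hLB : L * B = 1 := by
    rw [hL, Matrix.mul_assoc, Matrix.nonsing_inv_mul _ hdet]
  have hBL : Bᵀ * Lᵀ = 1 := by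
    rw [← transpose_mul, hLB, transpose_one]
  -- lam is positive
  have hlam_pos : 0 < lam := by
    by_contra h
    push_neg at h
    have hps : ((-lam) • (1 : Matrix (Fin n) (Fin n) ℝ)).PosSemidef :=
      aux_posSemidef_smul_one (by linarith)
    have hpd : (S + (-lam) • (1 : Matrix (Fin n) (Fin n) ℝ)).PosDef := hS.add_posSemidef hps
    have hu : IsUnit ((algebraMap ℝ (Matrix (Fin n) (Fin n) ℝ)) lam - S) := by
      have : (algebraMap ℝ (Matrix (Fin n) (Fin n) ℝ)) lam - S
          = -(S + (-lam) • (1 : Matrix (Fin n) (Fin n) ℝ)) := by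
        rw [Algebra.algebraMap_eq_smul_one]
        module
      rw [this, IsUnit.neg_iff]
      exact hpd.isUnit
    exact (spectrum.mem_iff.mp hlam.1) hu
  -- S - lam • 1 is positive semidefinite
  have hT : (S - lam • (1 : Matrix (Fin n) (Fin n) ℝ)).PosSemidef := by
    have hTh : (S - lam • (1 : Matrix (Fin n) (Fin n) ℝ)).IsHermitian := by
      rw [IsHermitian, conjTranspose_sub, conjTranspose_smul, hS.1]
      simp
    refine hTh.posSemidef_iff_eigenvalues_nonneg.mpr fun i => ?_
    have hmem : hTh.eigenvalues i ∈ spectrum ℝ (S - lam • (1 : Matrix (Fin n) (Fin n) ℝ)) :=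
      hTh.eigenvalues_mem_spectrum_real i
    have heq : S - lam • (1 : Matrix (Fin n) (Fin n) ℝ)
        = S - (algebraMap ℝ (Matrix (Fin n) (Fin n) ℝ)) lam := by
      rw [Algebra.algebraMap_eq_smul_one]
    have hmem2 : hTh.eigenvalues i ∈ (spectrum ℝ S - {lam} : Set ℝ) := by
      rw [spectrum.sub_singleton_eq, ← heq]
      exact hmem
    obtain ⟨μ, hμ, ν, hν, hmn'⟩ := hmem2
    simp only [Set.mem_singleton_iff] at hν
    subst hν
    rw [← hmn']
    have := hlam.2 hμ
    simp only [Pi.zero_apply, sub_nonneg]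
    linarith
  -- the main equation
  have h1 : Bᵀ * (Lᵀ * H * L) * B = H := by
    have : Bᵀ * (Lᵀ * H * L) * B = (Bᵀ * Lᵀ) * H * (L * B) := by
      simp only [Matrix.mul_assoc]
    rw [this, hBL, hLB, one_mul, mul_one]
  have heq : H + Bᵀ * (-(Lᵀ * H * L) + (δ / lam) • R) * B = (δ / lam) • S := by
    rw [Matrix.mul_add, Matrix.add_mul, Matrix.mul_neg, Matrix.neg_mul, h1,
      Matrix.mul_smul, Matrix.smul_mul, add_neg_cancel_left, hSdef]
  refine ⟨heq, ?_⟩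
  rw [heq]
  have hc : 0 ≤ δ / lam := le_of_lt (div_pos hδ hlam_pos)
  have : (δ / lam) • S - δ • (1 : Matrix (Fin n) (Fin n) ℝ)
      = (δ / lam) • (S - lam • (1 : Matrix (Fin n) (Fin n) ℝ)) := by
    rw [smul_sub, smul_smul, div_mul_cancel₀ δ hlam_pos.ne']
  rw [this]
  exact aux_posSemidef_smul hT hc
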